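/- The graceful colouring of K_{n+1} is a beautiful colouring; in particular: each monochromatic subgraph is acyclic, and taking V_2 to be the set of even-labelled vertices and V_1 the set of odd-labelled vertices when n is even (and V_2 = even-labelled vertices {0,2,...,n-1}, V_1 = odd-labelled vertices {1,3,...,n} when n is odd), conditions (i), (ii), (iii) of the definition of beautiful hold. -/

import Mathlib

open SimpleGraph Set

/-- The graceful colouring of `K_{n+1}`: the edge joining `u` and `v` gets colour
`|u - v|`. `D i := {e | gcol e = i}` is the class of colour `i`, of size `n+1-i`. -/
def gcol (n : ℕ) : Sym2 (Fin (n + 1)) → ℕ :=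
  Sym2.lift ⟨fun a b => max a.val b.val - min a.val b.val, fun a b => by
    simp [max_comm, min_comm]⟩

def gclass (n i : ℕ) : Set (Sym2 (Fin (n + 1))) :=
  {e ∈ (⊤ : SimpleGraph (Fin (n + 1))).edgeSet | gcol n e = i}

lemma acyclic_aux {V : Type*} [LinearOrder V] {G : SimpleGraph V}
    (h : ∀ v a b : V, G.Adj v a → G.Adj v b → a < v → b < v → a = b) :
    G.IsAcyclic := by
  intro v c hc
  have hne : c.support.toFinset.Nonempty := by
    simp [List.toFinset_nonempty_iff, c.support_ne_nil]
  set m := c.support.toFinset.max' hne with hm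
  have hmmem : m ∈ c.support := by
    have := c.support.toFinset.max'_mem hne
    simpa using this
  have hmax : ∀ x ∈ c.support, x ≤ m := by
    intro x hx
    exact c.support.toFinset.le_max' x (by simpa using hx)
  set c' := c.rotate m hmmem with hc'def
  have hc' : c'.IsCycle := hc.rotate hmmem
  have hsub : ∀ x ∈ c'.support, x ∈ c.support := by
    intro x hx
    rw [c'.support_eq_cons] at hx
    rcases List.mem_cons.mp hx with rfl | hx
    · exact hmmem
    · have := (SimpleGraph.Walk.support_rotate c m hmmem).perm.mem_iff.mp hx
      exact List.mem_of_mem_tail this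
  obtain ⟨a, hadj, q, hq⟩ := SimpleGraph.Walk.not_nil_iff.mp hc'.not_nil
  have hcyc2 := (SimpleGraph.Walk.cons_isCycle_iff q hadj).mp (hq ▸ hc')
  have ha : a < m := by
    have : a ∈ c'.support := by
      rw [hq]; simp
    exact lt_of_le_of_ne (hmax a (hsub a this)) hadj.ne'
  have hqnil : ¬ q.Nil := by
    intro hnil
    have h3 := hc'.three_le_length
    rw [hq] at h3
    simp [SimpleGraph.Walk.nil_iff_length_eq.mp hnil] at h3
  have hqrnil : ¬ q.reverse.Nil := by
    rw [SimpleGraph.Walk.nil_iff_length_eq] at hqnil ⊢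
    simpa using hqnil
  obtain ⟨b, hadj', r, hqr⟩ := SimpleGraph.Walk.not_nil_iff.mp hqrnil
  have hb : b < m := by
    have hbm : b ∈ q.support := by
      have : b ∈ q.reverse.support := by rw [hqr]; simp
      rw [SimpleGraph.Walk.support_reverse] at this
      exact List.mem_reverse.mp this
    have : b ∈ c'.support := by
      rw [hq, SimpleGraph.Walk.support_cons]
      exact List.mem_cons_of_mem _ hbm
    exact lt_of_le_of_ne (hmax b (hsub b this)) hadj'.ne'
  have hab : a = b := h m a b hadj hadj' ha hb
  have : s(m, b) ∈ q.edges := by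
    have : s(m, b) ∈ q.reverse.edges := by rw [hqr]; simp
    rw [SimpleGraph.Walk.edges_reverse] at this
    exact List.mem_reverse.mp this
  exact hcyc2.2 (hab ▸ this)

lemma cOdd (N : ℕ) : ((Finset.range N).filter (fun x => x % 2 = 1)).card = N / 2 := by
  induction N with
  | zero => simp
  | succ N ih =>
    rw [Finset.range_add_one, Finset.filter_insert]
    by_cases h : N % 2 = 1
    · rw [if_pos h, Finset.card_insert_of_notMem (by simp)]
      omega
    · rw [if_neg h]; omega

lemma cEven (N : ℕ) : ((Finset.range N).filter (fun x => x % 2 = 0)).card = (N + 1) / 2 := by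
  induction N with
  | zero => simp
  | succ N ih =>
    rw [Finset.range_add_one, Finset.filter_insert]
    by_cases h : N % 2 = 0
    · rw [if_pos h, Finset.card_insert_of_notMem (by simp)]
      omega
    · rw [if_neg h]; omega

lemma cOddGe (N i : ℕ) :
    ((Finset.range N).filter (fun x => x % 2 = 1 ∧ i ≤ x)).card = N / 2 - i / 2 := by
  induction N with
  | zero => simp
  | succ N ih =>
    rw [Finset.range_add_one, Finset.filter_insert]
    by_cases h : N % 2 = 1 ∧ i ≤ N
    · rw [if_pos h, Finset.card_insert_of_notMem (by simp)]
      omega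
    · rw [if_neg h]; omega

lemma cEvenGe (N i : ℕ) :
    ((Finset.range N).filter (fun x => x % 2 = 0 ∧ i ≤ x)).card = (N + 1) / 2 - (i + 1) / 2 := by
  induction N with
  | zero => simp
  | succ N ih =>
    rw [Finset.range_add_one, Finset.filter_insert]
    by_cases h : N % 2 = 0 ∧ i ≤ N
    · rw [if_pos h, Finset.card_insert_of_notMem (by simp)]
      omega
    · rw [if_neg h]; omega

lemma card_filter_fin (m : ℕ) (p : ℕ → Prop) [DecidablePred p] :
    (Finset.univ.filter (fun v : Fin m => p v.val)).card
      = ((Finset.range m).filter p).card := by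
  rw [← Finset.card_image_of_injective _ Fin.val_injective]
  congr 1
  ext a
  simp only [Finset.mem_image, Finset.mem_filter, Finset.mem_univ, true_and,
    Finset.mem_range]
  constructor
  · rintro ⟨v, hv, rfl⟩; exact ⟨v.isLt, hv⟩
  · rintro ⟨h1, h2⟩; exact ⟨⟨a, h1⟩, h2, rfl⟩

lemma ncard_fin (m : ℕ) (p : ℕ → Prop) [DecidablePred p] :
    {v : Fin m | p v.val}.ncard = ((Finset.range m).filter p).card := by
  rw [← card_filter_fin, ← Set.ncard_coe_finset]
  congr 1
  ext v; simp

lemma mem_gclass {n i : ℕ} (u v : Fin (n + 1)) :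
    s(u, v) ∈ gclass n i ↔ u ≠ v ∧ (u.val + i = v.val ∨ v.val + i = u.val) := by
  have hval : u ≠ v ↔ u.val ≠ v.val := by
    constructor
    · intro h h'; exact h (Fin.ext h')
    · intro h h'; exact h (by rw [h'])
  simp only [gclass, Set.mem_setOf_eq, SimpleGraph.mem_edgeSet, SimpleGraph.top_adj,
    gcol, Sym2.lift_mk]
  constructor
  · rintro ⟨hne, heq⟩
    refine ⟨hne, ?_⟩
    rw [hval] at hne
    omega
  · rintro ⟨hne, heq⟩
    rw [hval] at hne
    exact ⟨hval.mpr hne, by omega⟩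

def emap (n i a : ℕ) : Sym2 (Fin (n + 1)) :=
  s(⟨min a n, by omega⟩, ⟨min (a + i) n, by omega⟩)

lemma gclass_eq (n i : ℕ) (h1 : 1 ≤ i) (h2 : i ≤ n) :
    gclass n i = ↑((Finset.range (n + 1 - i)).image (emap n i)) := by
  ext e
  induction e with
  | _ u v =>
    rw [mem_gclass]
    simp only [Finset.coe_image, Finset.coe_range, Set.mem_image, Set.mem_Iio]
    constructor
    · rintro ⟨hne, hor | hor⟩
      · refine ⟨u.val, by omega, ?_⟩
        simp only [emap]
        have h3 : min (u.val) n = u.val := by omega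
        have h4 : min (u.val + i) n = v.val := by omega
        rw [Sym2.eq_iff]
        left
        constructor <;> ext <;> simp [h3, h4]
      · refine ⟨v.val, by omega, ?_⟩
        simp only [emap]
        have h3 : min (v.val) n = v.val := by omega
        have h4 : min (v.val + i) n = u.val := by omega
        rw [Sym2.eq_iff]
        right
        constructor <;> ext <;> simp [h3, h4]
    · rintro ⟨a, ha, heq⟩
      simp only [emap, Sym2.eq_iff] at heq
      have h3 : min a n = a := by omega
      have h4 : min (a + i) n = a + i := by omega
      rcases heq with ⟨hu, hv⟩ | ⟨hu, hv⟩ <;>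
        [skip; skip] <;>
      · have hu' := congrArg Fin.val hu
        have hv' := congrArg Fin.val hv
        simp [h3, h4] at hu' hv'
        constructor
        · intro h; have := congrArg Fin.val h; omega
        · omega

lemma emap_injOn (n i : ℕ) (h2 : i ≤ n) :
    Set.InjOn (emap n i) (Finset.range (n + 1 - i)) := by
  intro a ha b hb heq
  simp only [Finset.coe_range, Set.mem_Iio] at ha hb
  simp only [emap, Sym2.eq_iff] at heq
  rcases heq with ⟨hu, hv⟩ | ⟨hu, hv⟩ <;>
  · have hu' := congrArg Fin.val hu
    have hv' := congrArg Fin.val hv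
    simp at hu' hv'
    omega

lemma vset_eq (n i : ℕ) (h1 : 1 ≤ i) (h2 : i ≤ n) :
    {v : Fin (n + 1) | ∃ e ∈ gclass n i, v ∈ e}
      = {v : Fin (n + 1) | v.val + i ≤ n ∨ i ≤ v.val} := by
  ext v
  simp only [Set.mem_setOf_eq]
  constructor
  · rintro ⟨e, he, hv⟩
    induction e with
    | _ x y =>
      rw [mem_gclass] at he
      rw [Sym2.mem_iff] at hv
      have hx := x.isLt
      have hy := y.isLt
      rcases hv with rfl | rfl <;> omega
  · intro hv
    rcases hv with hv | hv
    · refine ⟨s(v, ⟨v.val + i, by omega⟩), ?_, ?_⟩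
      · rw [mem_gclass]
        refine ⟨?_, Or.inl rfl⟩
        intro h
        have := congrArg Fin.val h
        simp at this
        omega
      · exact Sym2.mem_mk_left _ _
    · refine ⟨s(⟨v.val - i, by omega⟩, v), ?_, ?_⟩
      · rw [mem_gclass]
        refine ⟨?_, Or.inl (by simp; omega)⟩
        intro h
        have := congrArg Fin.val h
        simp at this
        omega
      · exact Sym2.mem_mk_right _ _
lemma gclass_parity_eq (n i : ℕ) (h1 : 1 ≤ i) (h2 : i ≤ n) (r : ℕ) (he : i % 2 = 0) :
    {e ∈ gclass n i | ∀ v : Fin (n + 1), v ∈ e → v.val % 2 = r}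
      = ↑(((Finset.range (n + 1 - i)).filter (fun a => a % 2 = r)).image (emap n i)) := by
  ext e
  simp only [Set.mem_setOf_eq, Finset.coe_image, Set.mem_image, Finset.mem_coe,
    Finset.mem_filter, Finset.mem_range]
  constructor
  · rintro ⟨hmem, hall⟩
    rw [gclass_eq n i h1 h2] at hmem
    simp only [Finset.coe_image, Set.mem_image, Finset.mem_coe, Finset.mem_range] at hmem
    obtain ⟨a, ha, rfl⟩ := hmem
    refine ⟨a, ⟨ha, ?_⟩, rfl⟩
    have hv := hall ⟨min a n, by omega⟩ (by simp [emap])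
    simp only [Fin.val_mk] at hv
    omega
  · rintro ⟨a, ⟨ha, hr⟩, rfl⟩
    constructor
    · rw [gclass_eq n i h1 h2]
      simp only [Finset.coe_image, Set.mem_image, Finset.mem_coe, Finset.mem_range]
      exact ⟨a, ha, rfl⟩
    · intro v hv
      simp only [emap, Sym2.mem_iff] at hv
      rcases hv with rfl | rfl
      · show min a n % 2 = r
        omega
      · show min (a + i) n % 2 = r
        omega

/-- the graceful colouring of `K_{n+1}` is beautiful: every edge gets a
colour in `{1,…,n}`, the class `D_i` of colour `i` has size `n+1-i`, each
monochromatic subgraph is acyclic and, with `V₂` the even-labelled vertices and `V₁`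
the odd-labelled ones (so `|V₁| = ⌊(n+1)/2⌋`, `|V₂| = ⌈(n+1)/2⌉`), conditions (i),
(ii), (iii) of the definition of a beautiful colouring hold.  (A class `D_i` has
size `n+1-i ≡ n (mod 2)` exactly when `i` is odd.) -/
theorem stmt7 (n : ℕ) :
    (∀ e ∈ (⊤ : SimpleGraph (Fin (n + 1))).edgeSet, gcol n e ∈ Set.Icc 1 n) ∧
    (∀ i ∈ Set.Icc 1 n, (gclass n i).ncard = n + 1 - i) ∧
    (∀ i ∈ Set.Icc 1 n, (SimpleGraph.fromEdgeSet (gclass n i)).IsAcyclic) ∧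
    ({v : Fin (n + 1) | v.val % 2 = 1} ∪ {v : Fin (n + 1) | v.val % 2 = 0} = Set.univ) ∧
    Disjoint {v : Fin (n + 1) | v.val % 2 = 1} {v : Fin (n + 1) | v.val % 2 = 0} ∧
    ({v : Fin (n + 1) | v.val % 2 = 1} : Set (Fin (n + 1))).ncard = (n + 1) / 2 ∧
    ({v : Fin (n + 1) | v.val % 2 = 0} : Set (Fin (n + 1))).ncard = (n + 2) / 2 ∧
    -- (i): the union of classes of size ≡ n (mod 2), i.e. odd colours, is the
    -- complete bipartite graph between the odd- and even-labelled vertices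
    (∀ u v : Fin (n + 1), u ≠ v →
      ((∃ i ∈ Set.Icc 1 n, Odd i ∧ s(u, v) ∈ gclass n i) ↔
        (u.val % 2 = 1 ∧ v.val % 2 = 0) ∨ (u.val % 2 = 0 ∧ v.val % 2 = 1))) ∧
    -- (ii): each class of size ≡ n (mod 2) splits its vertex set evenly
    (∀ i ∈ Set.Icc 1 n, Odd i →
      ({v : Fin (n + 1) | ∃ e ∈ gclass n i, v ∈ e} ∩
          {v : Fin (n + 1) | v.val % 2 = 1}).ncard =
        {v : Fin (n + 1) | ∃ e ∈ gclass n i, v ∈ e}.ncard / 2 ∧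
      ({v : Fin (n + 1) | ∃ e ∈ gclass n i, v ∈ e} ∩
          {v : Fin (n + 1) | v.val % 2 = 0}).ncard =
        ({v : Fin (n + 1) | ∃ e ∈ gclass n i, v ∈ e}.ncard + 1) / 2) ∧
    -- (iii): each class of size ≢ n (mod 2), i.e. of even colour `i` and size
    -- `j = n+1-i`, has `⌊j/2⌋` edges inside V₁ and `⌈j/2⌉` edges inside V₂
    (∀ i ∈ Set.Icc 1 n, Even i →
      ({e ∈ gclass n i | ∀ v : Fin (n + 1), v ∈ e → v.val % 2 = 1}).ncard =
        (n + 1 - i) / 2 ∧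
      ({e ∈ gclass n i | ∀ v : Fin (n + 1), v ∈ e → v.val % 2 = 0}).ncard =
        (n + 2 - i) / 2) := by
  refine ⟨?_, ?_, ?_, ?_, ?_, ?_, ?_, ?_, ?_, ?_⟩
  · -- colours in [1, n]
    intro e he
    induction e with
    | _ u v =>
      rw [SimpleGraph.mem_edgeSet, SimpleGraph.top_adj] at he
      have hval : u.val ≠ v.val := fun h => he (Fin.ext h)
      have hu := u.isLt
      have hv := v.isLt
      simp only [gcol, Sym2.lift_mk, Set.mem_Icc]
      omega
  · -- sizes
    rintro i ⟨hi1, hi2⟩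
    rw [gclass_eq n i hi1 hi2, Set.ncard_coe_finset,
      Finset.card_image_of_injOn (emap_injOn n i hi2), Finset.card_range]
  · -- acyclic
    rintro i ⟨hi1, hi2⟩
    apply acyclic_aux
    intro v a b hva hvb hav hbv
    rw [SimpleGraph.fromEdgeSet_adj, mem_gclass] at hva hvb
    rw [Fin.lt_def] at hav hbv
    ext
    omega
  · ext v; simp; omega
  · rw [Set.disjoint_left]
    intro v h1 h2
    simp only [Set.mem_setOf_eq] at h1 h2
    omega
  · exact (ncard_fin (n + 1) (fun x => x % 2 = 1)).trans (cOdd (n + 1))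
  · refine (ncard_fin (n + 1) (fun x => x % 2 = 0)).trans ?_
    rw [cEven]
  · -- (i)
    intro u v huv
    have hval : u.val ≠ v.val := fun h => huv (Fin.ext h)
    have hu := u.isLt
    have hv := v.isLt
    constructor
    · rintro ⟨i, ⟨hi1, hi2⟩, hodd, hmem⟩
      rw [mem_gclass] at hmem
      rw [Nat.odd_iff] at hodd
      obtain ⟨-, hor⟩ := hmem
      omega
    · intro h
      refine ⟨max u.val v.val - min u.val v.val, ⟨by omega, by omega⟩, ?_, ?_⟩
      · rw [Nat.odd_iff]; omega
      · rw [mem_gclass]; exact ⟨huv, by omega⟩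
  · -- (ii)
    rintro i ⟨hi1, hi2⟩ hodd
    obtain ⟨k, hk⟩ := hodd
    rw [vset_eq n i hi1 hi2]
    have S1 : {v : Fin (n + 1) | v.val + i ≤ n ∨ i ≤ v.val}.ncard
        = ((Finset.range (n + 1)).filter (fun x => x + i ≤ n ∨ i ≤ x)).card :=
      ncard_fin (n + 1) (fun x => x + i ≤ n ∨ i ≤ x)
    have A1 : ({v : Fin (n + 1) | v.val + i ≤ n ∨ i ≤ v.val}
          ∩ {v : Fin (n + 1) | v.val % 2 = 1}).ncard
        = ((Finset.range (n + 1)).filter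
            (fun x => x % 2 = 1 ∧ (x + i ≤ n ∨ i ≤ x))).card := by
      rw [show ({v : Fin (n + 1) | v.val + i ≤ n ∨ i ≤ v.val}
            ∩ {v : Fin (n + 1) | v.val % 2 = 1})
          = {v : Fin (n + 1) | v.val % 2 = 1 ∧ (v.val + i ≤ n ∨ i ≤ v.val)} from by
        ext v; simp [Set.mem_inter_iff]; tauto]
      exact ncard_fin (n + 1) (fun x => x % 2 = 1 ∧ (x + i ≤ n ∨ i ≤ x))
    have A0 : ({v : Fin (n + 1) | v.val + i ≤ n ∨ i ≤ v.val}
          ∩ {v : Fin (n + 1) | v.val % 2 = 0}).ncard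
        = ((Finset.range (n + 1)).filter
            (fun x => x % 2 = 0 ∧ (x + i ≤ n ∨ i ≤ x))).card := by
      rw [show ({v : Fin (n + 1) | v.val + i ≤ n ∨ i ≤ v.val}
            ∩ {v : Fin (n + 1) | v.val % 2 = 0})
          = {v : Fin (n + 1) | v.val % 2 = 0 ∧ (v.val + i ≤ n ∨ i ≤ v.val)} from by
        ext v; simp [Set.mem_inter_iff]; tauto]
      exact ncard_fin (n + 1) (fun x => x % 2 = 0 ∧ (x + i ≤ n ∨ i ≤ x))
    by_cases hc : 2 * i ≤ n + 1
    · have eP : (Finset.range (n + 1)).filter (fun x => x + i ≤ n ∨ i ≤ x)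
          = Finset.range (n + 1) := by
        apply Finset.filter_true_of_mem
        intro x hx
        rw [Finset.mem_range] at hx
        omega
      have e1 : (Finset.range (n + 1)).filter (fun x => x % 2 = 1 ∧ (x + i ≤ n ∨ i ≤ x))
          = (Finset.range (n + 1)).filter (fun x => x % 2 = 1) := by
        apply Finset.filter_congr
        intro x hx
        rw [Finset.mem_range] at hx
        constructor
        · tauto
        · intro h; exact ⟨h, by omega⟩
      have e0 : (Finset.range (n + 1)).filter (fun x => x % 2 = 0 ∧ (x + i ≤ n ∨ i ≤ x))
          = (Finset.range (n + 1)).filter (fun x => x % 2 = 0) := by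
        apply Finset.filter_congr
        intro x hx
        rw [Finset.mem_range] at hx
        constructor
        · tauto
        · intro h; exact ⟨h, by omega⟩
      constructor
      · rw [A1, S1, eP, e1, cOdd, Finset.card_range]
      · rw [A0, S1, eP, e0, cEven, Finset.card_range]
    · have split1 : (Finset.range (n + 1)).filter (fun x => x % 2 = 1 ∧ (x + i ≤ n ∨ i ≤ x))
          = (Finset.range (n + 1)).filter (fun x => x % 2 = 1 ∧ x + i ≤ n)
            ∪ (Finset.range (n + 1)).filter (fun x => x % 2 = 1 ∧ i ≤ x) := by
        ext x
        simp only [Finset.mem_filter, Finset.mem_union, Finset.mem_range]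
        tauto
      have split0 : (Finset.range (n + 1)).filter (fun x => x % 2 = 0 ∧ (x + i ≤ n ∨ i ≤ x))
          = (Finset.range (n + 1)).filter (fun x => x % 2 = 0 ∧ x + i ≤ n)
            ∪ (Finset.range (n + 1)).filter (fun x => x % 2 = 0 ∧ i ≤ x) := by
        ext x
        simp only [Finset.mem_filter, Finset.mem_union, Finset.mem_range]
        tauto
      have splitP : (Finset.range (n + 1)).filter (fun x => x + i ≤ n ∨ i ≤ x)
          = (Finset.range (n + 1)).filter (fun x => x + i ≤ n)
            ∪ (Finset.range (n + 1)).filter (fun x => i ≤ x) := by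
        ext x
        simp only [Finset.mem_filter, Finset.mem_union, Finset.mem_range]
        tauto
      have d1 : Disjoint ((Finset.range (n + 1)).filter (fun x => x % 2 = 1 ∧ x + i ≤ n))
          ((Finset.range (n + 1)).filter (fun x => x % 2 = 1 ∧ i ≤ x)) := by
        rw [Finset.disjoint_left]
        intro x hx hx'
        simp only [Finset.mem_filter, Finset.mem_range] at hx hx'
        omega
      have d0 : Disjoint ((Finset.range (n + 1)).filter (fun x => x % 2 = 0 ∧ x + i ≤ n))
          ((Finset.range (n + 1)).filter (fun x => x % 2 = 0 ∧ i ≤ x)) := by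
        rw [Finset.disjoint_left]
        intro x hx hx'
        simp only [Finset.mem_filter, Finset.mem_range] at hx hx'
        omega
      have dP : Disjoint ((Finset.range (n + 1)).filter (fun x => x + i ≤ n))
          ((Finset.range (n + 1)).filter (fun x => i ≤ x)) := by
        rw [Finset.disjoint_left]
        intro x hx hx'
        simp only [Finset.mem_filter, Finset.mem_range] at hx hx'
        omega
      have g1 : (Finset.range (n + 1)).filter (fun x => x % 2 = 1 ∧ x + i ≤ n)
          = (Finset.range (n + 1 - i)).filter (fun x => x % 2 = 1) := by
        ext x
        simp only [Finset.mem_filter, Finset.mem_range]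
        omega
      have g0 : (Finset.range (n + 1)).filter (fun x => x % 2 = 0 ∧ x + i ≤ n)
          = (Finset.range (n + 1 - i)).filter (fun x => x % 2 = 0) := by
        ext x
        simp only [Finset.mem_filter, Finset.mem_range]
        omega
      have gP1 : (Finset.range (n + 1)).filter (fun x => x + i ≤ n)
          = Finset.range (n + 1 - i) := by
        ext x
        simp only [Finset.mem_filter, Finset.mem_range]
        omega
      have gP2 : (Finset.range (n + 1)).filter (fun x => i ≤ x)
          = Finset.Ico i (n + 1) := by
        ext x
        simp only [Finset.mem_filter, Finset.mem_range, Finset.mem_Ico]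
        omega
      constructor
      · rw [A1, S1, split1, splitP, Finset.card_union_of_disjoint d1,
          Finset.card_union_of_disjoint dP, g1, gP1, gP2, cOdd, cOddGe,
          Finset.card_range, Nat.card_Ico]
        omega
      · rw [A0, S1, split0, splitP, Finset.card_union_of_disjoint d0,
          Finset.card_union_of_disjoint dP, g0, gP1, gP2, cEven, cEvenGe,
          Finset.card_range, Nat.card_Ico]
        omega
  · -- (iii)
    rintro i ⟨hi1, hi2⟩ heven
    obtain ⟨k, hk⟩ := heven
    have he : i % 2 = 0 := by omega
    have hinj : Set.InjOn (emap n i)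
        ↑((Finset.range (n + 1 - i)).filter (fun a => a % 2 = 1)) :=
      (emap_injOn n i hi2).mono (Finset.coe_subset.mpr (Finset.filter_subset _ _))
    have hinj0 : Set.InjOn (emap n i)
        ↑((Finset.range (n + 1 - i)).filter (fun a => a % 2 = 0)) :=
      (emap_injOn n i hi2).mono (Finset.coe_subset.mpr (Finset.filter_subset _ _))
    constructor
    · rw [gclass_parity_eq n i hi1 hi2 1 he, Set.ncard_coe_finset,
        Finset.card_image_of_injOn hinj, cOdd]
    · rw [gclass_parity_eq n i hi1 hi2 0 he, Set.ncard_coe_finset,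
        Finset.card_image_of_injOn hinj0, cEven]
      omega
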